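/- Let Upsilon_2(x) = integral from L to x of g_2(t) dt. Then firm 1's expected payoff against mu_2 from pricing at x, namely x*(Xhi_1*Upsilon_2(x) + Xlo_1*(1 - Upsilon_2(x))), equals R*Xhi_1 for every x in [L, R], while for every x in [0, L) the payoff x*Xlo_1 is strictly less than R*Xhi_1. Consequently firm 1's equilibrium payoff is pi_1* = R*Xhi_1 and no pure price in [0,R] yields firm 1 a payoff exceeding R*Xhi_1 against mu_2. -/

import Mathlib

open MeasureTheory

/-- Let `Υ₂(x) = ∫_L^x g₂(t) dt` be the CDF of firm 2's equilibrium mixed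
strategy, with `g₂(t) = R*Xhi₁/((Xlo₁ - Xhi₁)*t²)` and `L = R*Xhi₁/Xlo₁`.
Then firm 1's expected payoff against `μ₂` from pricing at `x`, namely
`x*(Xhi₁*Υ₂(x) + Xlo₁*(1 - Υ₂(x)))`, equals `R*Xhi₁` for every `x ∈ [L, R]`,
while for every `x ∈ [0, L)` the payoff `x*Xlo₁` is strictly less than
`R*Xhi₁`. Consequently firm 1's equilibrium payoff is `π₁* = R*Xhi₁` and no
pure price in `[0, R]` yields firm 1 a payoff exceeding `R*Xhi₁` against
`μ₂`. -/
theorem firm_one_payoff_constant_on_support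
    (R Xlo₁ Xlo₂ Xhi₁ Xhi₂ : ℝ) (hR : 0 < R)
    (h12 : Xlo₂ ≤ Xlo₁) (hlo2 : 0 < Xlo₂)
    (hhi1 : 0 < Xhi₁) (h1 : Xhi₁ < Xlo₁)
    (hhi2 : 0 < Xhi₂) (h2 : Xhi₂ < Xlo₂)
    (hhi12 : Xhi₂ ≤ Xhi₁) (hcross : Xhi₂ * Xlo₁ ≤ Xhi₁ * Xlo₂)
    (L : ℝ) (hL : L = R * Xhi₁ / Xlo₁)
    (Υ₂ : ℝ → ℝ)
    (hΥ₂ : ∀ x : ℝ, Υ₂ x = ∫ t in L..x, R * Xhi₁ / ((Xlo₁ - Xhi₁) * t ^ 2)) :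
    (∀ x ∈ Set.Icc L R,
        x * (Xhi₁ * Υ₂ x + Xlo₁ * (1 - Υ₂ x)) = R * Xhi₁) ∧
      (∀ x ∈ Set.Ico (0 : ℝ) L, x * Xlo₁ < R * Xhi₁) ∧
      (∀ x ∈ Set.Icc (0 : ℝ) R,
        (if x < L then x * Xlo₁ else x * (Xhi₁ * Υ₂ x + Xlo₁ * (1 - Υ₂ x)))
          ≤ R * Xhi₁) := by
  have hlo1 : (0:ℝ) < Xlo₁ := hhi1.trans h1
  have hLpos : 0 < L := by rw [hL]; positivity
  have hd : (0:ℝ) < Xlo₁ - Xhi₁ := sub_pos.mpr h1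
  have hmain : ∀ x ∈ Set.Icc L R,
      x * (Xhi₁ * Υ₂ x + Xlo₁ * (1 - Υ₂ x)) = R * Xhi₁ := by
    intro x hx
    have hxL : L ≤ x := hx.1
    have hxpos : 0 < x := hLpos.trans_le hxL
    have hnot : (0:ℝ) ∉ Set.uIcc L x := by
      rw [Set.mem_uIcc]
      push_neg
      refine ⟨fun h => absurd h (not_le.mpr hLpos), fun h => absurd h (not_le.mpr hxpos)⟩
    have hΥval : Υ₂ x = R * Xhi₁ / (Xlo₁ - Xhi₁) * (1 / L - 1 / x) := by
      rw [hΥ₂ x]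
      have : ∀ t : ℝ, R * Xhi₁ / ((Xlo₁ - Xhi₁) * t ^ 2)
          = R * Xhi₁ / (Xlo₁ - Xhi₁) * t ^ (-2 : ℤ) := by
        intro t
        rcases eq_or_ne t 0 with ht | ht
        · simp [ht]
        · rw [zpow_neg]
          field_simp
      simp_rw [this]
      rw [intervalIntegral.integral_const_mul,
        integral_zpow (Or.inr ⟨by norm_num, hnot⟩)]
      have hL0 : L ≠ 0 := ne_of_gt hLpos
      have hx0 : x ≠ 0 := ne_of_gt hxpos
      norm_num
      left
      ring
    rw [hΥval, hL] at *
    have hL0 : R * Xhi₁ / Xlo₁ ≠ 0 := by positivity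
    have hx0 : x ≠ 0 := ne_of_gt hxpos
    field_simp
    ring
  refine ⟨hmain, ?_, ?_⟩
  · intro x hx
    have : x * Xlo₁ < L * Xlo₁ := by
      exact mul_lt_mul_of_pos_right hx.2 hlo1
    calc x * Xlo₁ < L * Xlo₁ := this
      _ = R * Xhi₁ := by rw [hL]; field_simp
  · intro x hx
    by_cases hxL : x < L
    · simp only [if_pos hxL]
      exact le_of_lt (by
        calc x * Xlo₁ < L * Xlo₁ := mul_lt_mul_of_pos_right hxL hlo1
          _ = R * Xhi₁ := by rw [hL]; field_simp)
    · simp only [if_neg hxL]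
      exact le_of_eq (hmain x ⟨not_lt.mp hxL, hx.2⟩)
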